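/- Let (S, 𝓕) be a measurable space, let P and Q be probability measures on it with Q ≪ P, let α > 1, and let g : S → ℝ be bounded and measurable. Then log ∫ e^{(α−1) g} dQ ≤ ((α−1)/α)·log ∫ e^{α g} dP + (α−1)·R_α(Q‖P). -/

import Mathlib

open MeasureTheory Classical

/-- The Rényi divergence of degree `α` of `Q` with respect to `P`:
`R_α(Q‖P) = (1/(α(α−1)))·log ∫ (dQ/dP)^α dP` if `Q ≪ P`, and `+∞` otherwise. -/
noncomputable def renyiDiv {S : Type*} [MeasurableSpace S] (α : ℝ)
    (Q P : Measure S) : EReal :=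
  if Q ≪ P then
    (((α * (α - 1))⁻¹ : ℝ) : EReal) * ENNReal.log (∫⁻ x, Q.rnDeriv P x ^ α ∂P)
  else ⊤

/-- Robust Rényi bound for risk-sensitive costs: if `Q ≪ P`, `α > 1` and `g` is
bounded measurable, then
`log ∫ e^{(α−1)g} dQ ≤ ((α−1)/α)·log ∫ e^{αg} dP + (α−1)·R_α(Q‖P)`. -/
theorem renyi_risk_sensitive_bound {S : Type*} [MeasurableSpace S]
    (P Q : Measure S) [IsProbabilityMeasure P] [IsProbabilityMeasure Q]
    (hQP : Q ≪ P) (α : ℝ) (hα : 1 < α)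
    (g : S → ℝ) (hg : Measurable g) (hbd : ∃ M : ℝ, ∀ x, |g x| ≤ M) :
    ((Real.log (∫ x, Real.exp ((α - 1) * g x) ∂Q) : ℝ) : EReal) ≤
      (((α - 1) / α * Real.log (∫ x, Real.exp (α * g x) ∂P) : ℝ) : EReal)
        + (((α - 1 : ℝ)) : EReal) * renyiDiv α Q P := by
  obtain ⟨M, hM⟩ := hbd
  have hα0 : (0:ℝ) < α := by linarith
  have hα1 : (0:ℝ) < α - 1 := by linarith
  set f := Q.rnDeriv P with hfdef
  have hf : Measurable f := Measure.measurable_rnDeriv Q P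
  set φ : S → ENNReal := fun x => ENNReal.ofReal (Real.exp ((α-1) * g x)) with hφdef
  have hφm : Measurable φ := ((measurable_const.mul hg).exp).ennreal_ofReal
  set A := ∫⁻ x, φ x ∂Q with hA
  set B := ∫⁻ x, ENNReal.ofReal (Real.exp (α * g x)) ∂P with hB
  set C := ∫⁻ x, f x ^ α ∂P with hC
  -- conjugate exponents
  have hpq : Real.HolderConjugate (α/(α-1)) α := by
    exact (Real.HolderConjugate.conjExponent hα).symm
  -- Hölder
  have holder : A ≤ B ^ ((α-1)/α) * C ^ (1/α) := by
    have h := ENNReal.lintegral_mul_le_Lp_mul_Lq P hpq hφm.aemeasurable hf.aemeasurable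
    have h1 : ∫⁻ x, (φ * f) x ∂P = A := by
      rw [hA]
      rw [← lintegral_rnDeriv_mul hQP hφm.aemeasurable]
      simp [mul_comm]
      rfl
    have h2 : ∫⁻ x, φ x ^ (α/(α-1)) ∂P = B := by
      rw [hB]
      congr 1 with x
      rw [hφdef]
      rw [ENNReal.ofReal_rpow_of_pos (Real.exp_pos _)]
      congr 1
      rw [← Real.exp_mul]
      congr 1
      field_simp
    rw [h1, h2] at h
    have : 1 / (α/(α-1)) = (α-1)/α := by rw [one_div, inv_div]
    rwa [this] at h
  -- bounds on A and B
  have hAub : A ≤ ENNReal.ofReal (Real.exp ((α-1) * M)) := by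
    calc A ≤ ∫⁻ _, ENNReal.ofReal (Real.exp ((α-1) * M)) ∂Q := by
          apply lintegral_mono; intro x
          exact ENNReal.ofReal_le_ofReal (Real.exp_le_exp.mpr
            (mul_le_mul_of_nonneg_left ((abs_le.mp (hM x)).2) hα1.le))
      _ = ENNReal.ofReal (Real.exp ((α-1) * M)) := by simp
  have hAlb : ENNReal.ofReal (Real.exp (-((α-1) * M))) ≤ A := by
    calc ENNReal.ofReal (Real.exp (-((α-1) * M)))
        = ∫⁻ _, ENNReal.ofReal (Real.exp (-((α-1) * M))) ∂Q := by simp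
      _ ≤ A := by
          apply lintegral_mono; intro x
          apply ENNReal.ofReal_le_ofReal
          apply Real.exp_le_exp.mpr
          rw [neg_mul_eq_mul_neg]
          exact mul_le_mul_of_nonneg_left (neg_le_of_abs_le (hM x)) hα1.le
  have hBub : B ≤ ENNReal.ofReal (Real.exp (α * M)) := by
    calc B ≤ ∫⁻ _, ENNReal.ofReal (Real.exp (α * M)) ∂P := by
          apply lintegral_mono; intro x
          exact ENNReal.ofReal_le_ofReal (Real.exp_le_exp.mpr
            (mul_le_mul_of_nonneg_left ((abs_le.mp (hM x)).2) hα0.le))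
      _ = ENNReal.ofReal (Real.exp (α * M)) := by simp
  have hBlb : ENNReal.ofReal (Real.exp (-(α * M))) ≤ B := by
    calc ENNReal.ofReal (Real.exp (-(α * M)))
        = ∫⁻ _, ENNReal.ofReal (Real.exp (-(α * M))) ∂P := by simp
      _ ≤ B := by
          apply lintegral_mono; intro x
          apply ENNReal.ofReal_le_ofReal
          apply Real.exp_le_exp.mpr
          rw [neg_mul_eq_mul_neg]
          exact mul_le_mul_of_nonneg_left (neg_le_of_abs_le (hM x)) hα0.le
  have hAne : A ≠ ⊤ := ne_top_of_le_ne_top ENNReal.ofReal_ne_top hAub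
  have hBne : B ≠ ⊤ := ne_top_of_le_ne_top ENNReal.ofReal_ne_top hBub
  have hA0 : A ≠ 0 := by
    intro h
    rw [h] at hAlb
    rw [nonpos_iff_eq_zero, ENNReal.ofReal_eq_zero] at hAlb
    exact absurd hAlb (not_le.mpr (Real.exp_pos _))
  have hB0 : B ≠ 0 := by
    intro h
    rw [h] at hBlb
    rw [nonpos_iff_eq_zero, ENNReal.ofReal_eq_zero] at hBlb
    exact absurd hBlb (not_le.mpr (Real.exp_pos _))
  have hC0 : C ≠ 0 := by
    intro h
    have hm : Measurable fun x => f x ^ α := hf.pow_const α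
    rw [hC, lintegral_eq_zero_iff hm] at h
    have hf0 : f =ᵐ[P] 0 := by
      filter_upwards [h] with x hx
      simp only [Pi.zero_apply] at hx ⊢
      exact (ENNReal.rpow_eq_zero_iff.mp hx).elim (fun h => h.1)
        (fun h => absurd h.2 (not_lt.mpr hα0.le))
    have : ∫⁻ x, f x ∂P = 0 := by
      rw [lintegral_congr_ae hf0]; simp
    rw [Measure.lintegral_rnDeriv hQP] at this
    simp at this
  -- unfold LHS integral
  have hLHS : ∫ x, Real.exp ((α - 1) * g x) ∂Q = A.toReal := by
    rw [hA, hφdef]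
    exact integral_eq_lintegral_of_nonneg_ae (Filter.Eventually.of_forall fun x => (Real.exp_pos _).le)
      ((measurable_const.mul hg).exp).aestronglyMeasurable
  have hRHS : ∫ x, Real.exp (α * g x) ∂P = B.toReal := by
    rw [hB]
    exact integral_eq_lintegral_of_nonneg_ae (Filter.Eventually.of_forall fun x => (Real.exp_pos _).le)
      ((measurable_const.mul hg).exp).aestronglyMeasurable
  rw [hLHS, hRHS]
  rw [renyiDiv, if_pos hQP]
  by_cases hCtop : C = ⊤
  · rw [← hC] at *
    rw [hCtop, ENNReal.log_top]
    have h1 : (((α * (α - 1))⁻¹ : ℝ) : EReal) * ⊤ = ⊤ := by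
      apply EReal.coe_mul_top_of_pos
      positivity
    rw [h1]
    have h2 : (((α - 1 : ℝ)) : EReal) * ⊤ = ⊤ := by
      apply EReal.coe_mul_top_of_pos; linarith
    rw [h2]
    rw [EReal.add_top_of_ne_bot (by exact EReal.coe_ne_bot _)]
    exact le_top
  · rw [← hC] at *
    have hlogC : ENNReal.log C = ((Real.log C.toReal : ℝ) : EReal) :=
      ENNReal.log_pos_real hC0 hCtop
    rw [hlogC]
    rw [← EReal.coe_mul, ← EReal.coe_mul, ← EReal.coe_add, EReal.coe_le_coe_iff]
    -- real inequality
    have ha : 0 < A.toReal := ENNReal.toReal_pos hA0 hAne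
    have hb : 0 < B.toReal := ENNReal.toReal_pos hB0 hBne
    have hc : 0 < C.toReal := ENNReal.toReal_pos hC0 hCtop
    have hreal : A.toReal ≤ B.toReal ^ ((α-1)/α) * C.toReal ^ (1/α) := by
      have := ENNReal.toReal_mono (by
        exact ENNReal.mul_ne_top (ENNReal.rpow_ne_top_of_nonneg (by positivity) hBne)
          (ENNReal.rpow_ne_top_of_nonneg (by positivity) hCtop)) holder
      rwa [ENNReal.toReal_mul, ← ENNReal.toReal_rpow, ← ENNReal.toReal_rpow] at this
    have hlog := Real.log_le_log ha hreal
    rw [Real.log_mul (by positivity) (by positivity), Real.log_rpow hb, Real.log_rpow hc] at hlog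
    have hkey : (α - 1) * ((α * (α - 1))⁻¹ * Real.log C.toReal) = (1/α) * Real.log C.toReal := by
      field_simp
    rw [hkey]
    linarith
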